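/- Let n, d ≥ 1, let v ∈ ℝ^d and ρ ≥ 0. Then { E.mulVec v : E an n×d real matrix with ‖E‖_{1→2} ≤ ρ } = { u ∈ ℝⁿ : ‖u‖₂ ≤ ρ·‖v‖₁ }, where ‖v‖₁ = Σ_i |v_i|. -/

import Mathlib

open scoped BigOperators

private lemma sqrt_eq_norm' {n : ℕ} (w : Fin n → ℝ) :
    Real.sqrt (∑ i, w i ^ 2) = ‖(WithLp.equiv 2 (Fin n → ℝ)).symm w‖ := by
  rw [EuclideanSpace.norm_eq]
  congr 1
  refine Finset.sum_congr rfl fun i _ => ?_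
  simp [Real.norm_eq_abs, sq_abs]

theorem stmt3 (n d : ℕ) (hn : 1 ≤ n) (hd : 1 ≤ d) (v : Fin d → ℝ) (ρ : ℝ) (hρ : 0 ≤ ρ) :
    {u : Fin n → ℝ | ∃ E : Matrix (Fin n) (Fin d) ℝ,
        (⨆ j : Fin d, Real.sqrt (∑ i, E i j ^ 2)) ≤ ρ ∧ u = E.mulVec v} =
      {u : Fin n → ℝ | Real.sqrt (∑ i, u i ^ 2) ≤ ρ * ∑ j, |v j|} := by
  have hdne : Nonempty (Fin d) := ⟨⟨0, hd⟩⟩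
  ext u
  simp only [Set.mem_setOf_eq]
  constructor
  · rintro ⟨E, hE, rfl⟩
    have hcol : ∀ j, Real.sqrt (∑ i, E i j ^ 2) ≤ ρ := fun j =>
      le_trans (le_ciSup (f := fun j => Real.sqrt (∑ i, E i j ^ 2))
        (Set.Finite.bddAbove (Set.finite_range _)) j) hE
    have h1 : E.mulVec v = ∑ j, v j • (fun i => E i j : Fin n → ℝ) := by
      funext i
      simp [Matrix.mulVec, dotProduct, Finset.sum_apply, mul_comm]
    have key : (WithLp.equiv 2 (Fin n → ℝ)).symm (E.mulVec v)
        = ∑ j, v j • (WithLp.equiv 2 (Fin n → ℝ)).symm (fun i => E i j) := by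
      calc (WithLp.equiv 2 (Fin n → ℝ)).symm (E.mulVec v)
          = (WithLp.linearEquiv 2 ℝ (Fin n → ℝ)).symm (E.mulVec v) := rfl
        _ = ∑ j, v j • (WithLp.linearEquiv 2 ℝ (Fin n → ℝ)).symm (fun i => E i j) := by
            rw [h1, map_sum]
            exact Finset.sum_congr rfl fun j _ => map_smul _ _ _
        _ = _ := rfl
    calc Real.sqrt (∑ i, E.mulVec v i ^ 2)
        = ‖∑ j, v j • (WithLp.equiv 2 (Fin n → ℝ)).symm (fun i => E i j)‖ := by
          rw [sqrt_eq_norm', key]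
      _ ≤ ∑ j, ‖v j • (WithLp.equiv 2 (Fin n → ℝ)).symm (fun i => E i j)‖ :=
          norm_sum_le _ _
      _ = ∑ j, |v j| * Real.sqrt (∑ i, E i j ^ 2) := by
          refine Finset.sum_congr rfl fun j _ => ?_
          rw [norm_smul, Real.norm_eq_abs, sqrt_eq_norm']
      _ ≤ ∑ j, |v j| * ρ := Finset.sum_le_sum fun j _ =>
          mul_le_mul_of_nonneg_left (hcol j) (abs_nonneg _)
      _ = ρ * ∑ j, |v j| := by rw [Finset.mul_sum]; exact Finset.sum_congr rfl fun j _ => mul_comm _ _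
  · intro hu
    set S := ∑ j, |v j| with hS
    have hS0 : 0 ≤ S := Finset.sum_nonneg fun j _ => abs_nonneg _
    rcases eq_or_lt_of_le hS0 with h0 | hpos
    · have hu0 : ∀ i, u i = 0 := by
        have h1 : Real.sqrt (∑ i, u i ^ 2) ≤ 0 := by
          calc Real.sqrt (∑ i, u i ^ 2) ≤ ρ * S := hu
            _ = 0 := by rw [← h0, mul_zero]
        have h2 : Real.sqrt (∑ i, u i ^ 2) = 0 := le_antisymm h1 (Real.sqrt_nonneg _)
        have h3 : (∑ i, u i ^ 2) = 0 := by
          have hnn : 0 ≤ ∑ i, u i ^ 2 := Finset.sum_nonneg fun i _ => sq_nonneg _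
          nlinarith [Real.sq_sqrt hnn, Real.sqrt_nonneg (∑ i, u i ^ 2)]
        intro i
        have := (Finset.sum_eq_zero_iff_of_nonneg (fun i _ => sq_nonneg (u i))).mp h3 i
          (Finset.mem_univ i)
        exact pow_eq_zero_iff (by norm_num) |>.mp this
      refine ⟨0, ?_, ?_⟩
      · refine ciSup_le fun j => ?_
        simp [hρ]
      · funext i
        simp [hu0, Matrix.mulVec]
    · set E : Matrix (Fin n) (Fin d) ℝ := fun i j => u i * (|v j| / (v j * S)) with hE
      have habs : ∀ j, |(|v j| / (v j * S))| ≤ 1 / S := by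
        intro j
        rcases eq_or_ne (v j) 0 with h | h
        · simp [h]
          positivity
        · rw [abs_div, abs_abs, abs_mul, abs_of_pos hpos, div_le_div_iff₀ (by positivity)
            (by positivity)]
          ring_nf
          nlinarith [abs_pos.mpr h]
      refine ⟨E, ?_, ?_⟩
      · refine ciSup_le fun j => ?_
        have hcol : (∑ i, E i j ^ 2) = (|v j| / (v j * S)) ^ 2 * ∑ i, u i ^ 2 := by
          rw [Finset.mul_sum]
          refine Finset.sum_congr rfl fun i _ => ?_
          simp [hE]
          ring
        rw [hcol, Real.sqrt_mul (sq_nonneg _), Real.sqrt_sq_eq_abs]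
        calc |(|v j| / (v j * S))| * Real.sqrt (∑ i, u i ^ 2)
            ≤ (1 / S) * (ρ * S) := by
              apply mul_le_mul (habs j) hu (Real.sqrt_nonneg _) (by positivity)
          _ = ρ := by field_simp
      · funext i
        simp only [Matrix.mulVec, dotProduct, hE]
        have : ∀ j, u i * (|v j| / (v j * S)) * v j = u i * (|v j| / S) := by
          intro j
          rcases eq_or_ne (v j) 0 with h | h
          · simp [h]
          · field_simp
        rw [Finset.sum_congr rfl fun j _ => this j, ← Finset.mul_sum, ← Finset.sum_div, ← hS]
        field_simp
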